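/- Let X₁, …, Xₙ be i.i.d. integer-valued random variables and let a = sup{x : P(X₁ = x) > 0} be finite, with p_a = P(X₁ = a) ∈ (0,1). For an integer t < n define M_{n;t} = max_{1≤i≤n−t+1}(X_i + ⋯ + X_{i+t−1}). Then M_{n;t} ≥ a·t if and only if there is a run of t consecutive indices i with X_i = a, and with λ = (n−t)·p_a^t·(1−p_a) + p_a^t one has |P(M_{n;t} ≥ a·t) − (1 − e^{−λ})| ≤ C·(λ ∧ 1)·e^{−c·t} for constants C, c depending only on p_a. -/

import Mathlib

open MeasureTheory ProbabilityTheory Real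
open scoped ENNReal NNReal
set_option maxHeartbeats 1000000

lemma stmt6_exp_lb (y : ℝ) (h0 : 0 ≤ y) (h2 : y ≤ 1/2) :
    Real.exp (-(y + 2*y^2)) ≤ 1 - y := by
  set w := y + 2*y^2 with hw
  have hw0 : 0 ≤ w := by nlinarith
  have h1 : (1 + w/2)^2 ≤ Real.exp w := by
    have h5 := Real.add_one_le_exp (w/2)
    have h := Real.exp_pos (w/2)
    have hmul : (w/2 + 1) * (w/2 + 1) ≤ Real.exp (w/2) * Real.exp (w/2) :=
      mul_le_mul h5 h5 (by linarith) h.le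
    have he : Real.exp (w/2) * Real.exp (w/2) = Real.exp w := by
      rw [← Real.exp_add]; ring_nf
    nlinarith
  have h6 : 1 + w ≤ (1 + w/2)^2 := by nlinarith [sq_nonneg (w/2)]
  have h7 : (0:ℝ) ≤ y^2 * (1 - 2*y) := mul_nonneg (sq_nonneg y) (by linarith)
  have h3 : 1 ≤ (1 - y) * (1 + w/2)^2 := by nlinarith
  rw [Real.exp_neg, inv_le_iff_one_le_mul₀ (Real.exp_pos w)]
  nlinarith [Real.exp_pos w]

lemma stmt6_tail (pt x D y tr Nr lam wn : ℝ)
    (hpt0 : 0 < pt) (hpt1 : pt ≤ 1/12) (htr : 1 ≤ tr)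
    (hx0 : 0 < x) (hxpt : x ≤ pt)
    (hD : D = pt + 2*x*tr) (hD4 : D ≤ 1/4)
    (hyD : y*(1-D) = x) (hy0 : 0 < y) (hy2x : y ≤ 2*x) (hy12 : y ≤ 1/2)
    (hNr1 : 1 ≤ Nr)
    (hlam : lam = Nr*x + pt)
    (hub : wn ≤ exp (-lam))
    (hlow : (1-pt) * exp (-(Nr*(y+2*y^2))) ≤ wn) :
    exp (-lam) - wn ≤ 31*tr*pt * min lam 1 := by
  set z := y + 2*y^2 with hz'
  clear_value z
  have hz0 : 0 ≤ z := by rw [hz']; nlinarith [sq_nonneg y]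
  have hD0 : 0 < D := by rw [hD]; nlinarith
  have hD3 : D ≤ 3*tr*pt := by rw [hD]; nlinarith
  have hlam_pos : 0 < lam := by rw [hlam]; nlinarith
  have hlam_pt : pt ≤ lam := by rw [hlam]; nlinarith
  have hNx_lam : Nr * x = lam - pt := by rw [hlam]; ring
  have hNx0 : (0:ℝ) ≤ Nr * x := by nlinarith
  have hdel : Nr*z ≤ lam - pt + 10 * D * lam := by
    have hyx' : y - x = y * D := by rw [← hyD]; ring
    have h1 : Nr*(y - x) ≤ 2*D*(Nr*x) := by
      have hyD2 : y * D ≤ 2 * x * D := mul_le_mul_of_nonneg_right hy2x hD0.le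
      have := mul_le_mul_of_nonneg_left hyD2 (by linarith : (0:ℝ) ≤ Nr)
      nlinarith
    have h2 : 2*Nr*y^2 ≤ 8*(Nr*x)*x := by
      have hy4 : y^2 ≤ 4*x^2 := by nlinarith
      have := mul_le_mul_of_nonneg_left hy4 (by linarith : (0:ℝ) ≤ 2*Nr)
      nlinarith
    have hxD : x ≤ D := by rw [hD]; nlinarith
    have h3 : 2*D*(Nr*x) ≤ 2*D*lam := by nlinarith
    have h4 : 8*(Nr*x)*x ≤ 8*lam*D := by nlinarith
    nlinarith
  have hmain : exp (-lam) - wn ≤ exp (-lam) * (pt^2 + 10*D*lam) := by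
    have hDl0 : 0 ≤ 10*D*lam := by positivity
    have e1 : exp (-lam) * (exp pt * exp (-(10*D*lam))) ≤ exp (-(Nr*z)) := by
      rw [← Real.exp_add, ← Real.exp_add]
      apply Real.exp_le_exp.2
      linarith
    have e2 : (1-pt) * (exp (-lam) * (exp pt * exp (-(10*D*lam)))) ≤ (1-pt) * exp (-(Nr*z)) :=
      mul_le_mul_of_nonneg_left e1 (by linarith)
    have h3 : 1 - pt^2 ≤ (1-pt) * exp pt := by
      have := Real.add_one_le_exp pt
      nlinarith
    have h4 : 1 - 10*D*lam ≤ exp (-(10*D*lam)) := by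
      have := Real.add_one_le_exp (-(10*D*lam)); linarith
    have e4 : (1 - pt^2) * (1 - 10*D*lam) ≤ ((1-pt) * exp pt) * exp (-(10*D*lam)) := by
      nlinarith [mul_nonneg (sub_nonneg.2 h3) (exp_pos (-(10*D*lam))).le,
        mul_nonneg (show (0:ℝ) ≤ 1 - pt^2 by nlinarith) (sub_nonneg.2 h4)]
    have e5 : 1 - pt^2 - 10*D*lam ≤ (1 - pt^2) * (1 - 10*D*lam) := by nlinarith
    have e6 : exp (-lam) * (1 - pt^2 - 10*D*lam) ≤ (1-pt) * (exp (-lam) * (exp pt * exp (-(10*D*lam)))) := by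
      have h7 : exp (-lam) * (1 - pt^2 - 10*D*lam) ≤ exp (-lam) * (((1-pt) * exp pt) * exp (-(10*D*lam))) :=
        mul_le_mul_of_nonneg_left (le_trans e5 e4) (exp_pos _).le
      nlinarith [h7]
    have e7 : exp (-lam) * (1 - pt^2 - 10*D*lam) ≤ wn := le_trans e6 (le_trans e2 hlow)
    nlinarith
  have hexp1 : exp (-lam) ≤ 1 := by
    calc exp (-lam) ≤ exp 0 := Real.exp_le_exp.2 (by linarith)
      _ = 1 := Real.exp_zero
  have hle1 : lam * exp (-lam) ≤ min lam 1 := by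
    apply le_min
    · nlinarith [(exp_pos (-lam)).le]
    · have hee : exp (-lam) * exp lam = 1 := by rw [← Real.exp_add]; simp
      have : lam ≤ exp lam := by nlinarith [Real.add_one_le_exp lam]
      nlinarith [exp_pos lam, exp_pos (-lam)]
  have hmin0 : (0:ℝ) ≤ min lam 1 := le_min hlam_pos.le one_pos.le
  have hA : exp (-lam) * pt^2 ≤ pt * min lam 1 := by
    have hmm := mul_le_mul_of_nonneg_left hlam_pt (mul_nonneg hpt0.le (exp_pos (-lam)).le)
    have : exp (-lam) * pt^2 ≤ pt * (lam * exp (-lam)) := by nlinarith [hmm]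
    nlinarith [mul_le_mul_of_nonneg_left hle1 hpt0.le]
  have hB : exp (-lam) * (10*D*lam) ≤ 30*tr*pt * min lam 1 := by
    have h1 : 10*D*(lam * exp (-lam)) ≤ 10*D * min lam 1 :=
      mul_le_mul_of_nonneg_left hle1 (by linarith)
    have h2 : 10*D*min lam 1 ≤ 30*tr*pt*min lam 1 :=
      mul_le_mul_of_nonneg_right (by nlinarith) hmin0
    nlinarith
  have hfin : exp (-lam) * (pt^2 + 10*D*lam) ≤ 31*tr*pt * min lam 1 := by
    have hpt_t : pt ≤ tr*pt := by nlinarith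
    have hsplit : exp (-lam) * (pt^2 + 10*D*lam) = exp (-lam)*pt^2 + exp (-lam)*(10*D*lam) := by ring
    nlinarith [mul_le_mul_of_nonneg_right hpt_t hmin0]
  linarith

lemma stmt6_analytic (p : ℝ) (hp0 : 0 < p) (hp1 : p < 1) (t n : ℕ) (ht : 1 ≤ t) (htn : t < n)
    (hsmall : 3 * (t:ℝ) * p^t ≤ 1/4)
    (w : ℕ → ℝ)
    (hw_lt : ∀ m, m < t → w m = 1)
    (hw_t : w t = 1 - p^t)
    (hmono : ∀ k m, k ≤ m → w m ≤ w k)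
    (hnn : ∀ m, 0 ≤ w m)
    (hrec : ∀ m, t + 1 ≤ m → w (m-1) = w m + (p^t*(1-p)) * w (m - t - 1)) :
    w n ≤ exp (-(((n - t : ℕ):ℝ) * (p^t*(1-p)) + p^t)) ∧
    exp (-(((n - t : ℕ):ℝ) * (p^t*(1-p)) + p^t)) - w n ≤
      31 * t * p^t * min (((n - t : ℕ):ℝ) * (p^t*(1-p)) + p^t) 1 := by
  have hw1 : ∀ m, w m ≤ 1 := by
    intro m
    have := hmono 0 m (Nat.zero_le m)
    rw [hw_lt 0 (by omega)] at this
    exact this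
  set pt := p^t with hpt
  clear_value pt
  have hpt0 : 0 < pt := by rw [hpt]; positivity
  have h1t : (1:ℝ) ≤ (t:ℝ) := by exact_mod_cast ht
  have hpt1 : pt ≤ 1/12 := by nlinarith
  set q := 1 - p with hq
  clear_value q
  have hq0 : 0 < q := by rw [hq]; linarith
  have hq1 : q ≤ 1 := by rw [hq]; linarith
  set x := pt * q with hx
  clear_value x
  have hx0 : 0 < x := by rw [hx]; exact mul_pos hpt0 hq0
  have hxpt : x ≤ pt := by rw [hx]; nlinarith
  set D := pt + 2 * x * (t:ℝ) with hD
  clear_value D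
  have hxt : x * t ≤ pt * t := by nlinarith
  have hD4 : D ≤ 1/4 := by nlinarith
  have hD0 : 0 < D := by nlinarith
  have hD3 : D ≤ 3 * t * pt := by nlinarith
  set y := x / (1 - D) with hy
  clear_value y
  have hy0 : 0 < y := by rw [hy]; exact div_pos hx0 (by linarith)
  have hyD : y * (1 - D) = x := by
    rw [hy]; exact div_mul_cancel₀ x (by linarith : (1:ℝ) - D ≠ 0)
  have hyx : x ≤ y := by nlinarith
  have hy2x : y ≤ 2 * x := by nlinarith
  have hy12 : y ≤ 1/2 := by nlinarith
  -- KEY inequality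
  have hKEY : x ≤ y * ((1 - pt) * (1 - y)^t) := by
    have hbern : 1 + (t:ℝ) * (-y) ≤ (1 + (-y))^t := one_add_mul_le_pow (by linarith) t
    have hbern' : 1 - (t:ℝ)*y ≤ (1-y)^t := by
      have he : 1 + (t:ℝ) * (-y) = 1 - (t:ℝ)*y := by ring
      have he2 : (1 + -y) = 1 - y := by ring
      rw [he, he2] at hbern
      exact hbern
    have hty : (t:ℝ) * y ≤ 2 * x * (t:ℝ) := by nlinarith
    have h2 : (1 - pt) * (1 - (t:ℝ)*y) ≤ (1 - pt) * (1 - y)^t :=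
      mul_le_mul_of_nonneg_left hbern' (by linarith)
    have h3 : 1 - D ≤ (1 - pt) * (1 - (t:ℝ)*y) := by nlinarith
    nlinarith
  -- ratio lower bound
  have hratio : ∀ m, t + 1 ≤ m → (1 - y) * w (m-1) ≤ w m := by
    intro m
    induction m using Nat.strong_induction_on with
    | _ m IH =>
      intro hm
      have chain : ∀ s r, r + s ≤ m - 1 → (1 - pt) * (1-y)^s * w r ≤ w (r+s) := by
        intro s
        induction s with
        | zero =>
          intro r _
          simpa using mul_le_of_le_one_left (hnn r) (by linarith : (1:ℝ) - pt ≤ 1)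
        | succ s ihs =>
          intro r hr
          have hpow0 : (0:ℝ) ≤ (1-y)^s := pow_nonneg (by linarith) s
          have hpow1 : (1-y)^s ≤ 1 := pow_le_one₀ (by linarith) (by linarith)
          rcases le_or_gt (t+1) (r+s+1) with hj | hj
          · have h1 := IH (r+s+1) (by omega) hj
            have h2 := ihs r (by omega)
            have h3 : r + s + 1 - 1 = r + s := by omega
            rw [h3] at h1
            have h4 : (1-y) * ((1 - pt) * (1-y)^s * w r) ≤ (1-y) * w (r+s) :=
              mul_le_mul_of_nonneg_left h2 (by linarith)
            have h5 : r + (s+1) = (r+s)+1 := by omega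
            rw [h5]
            calc (1 - pt) * (1-y)^(s+1) * w r
                = (1-y) * ((1 - pt) * (1-y)^s * w r) := by ring
              _ ≤ (1-y) * w (r+s) := h4
              _ ≤ w (r+s+1) := h1
          · have hws : 1 - pt ≤ w (r+s+1) := by
              rcases lt_or_eq_of_le (by omega : r+s+1 ≤ t) with h | h
              · rw [hw_lt _ h]; linarith
              · rw [h, hw_t]
            have hp1' : (1-y)^(s+1) ≤ 1 := pow_le_one₀ (by linarith) (by linarith)
            have hp0' : (0:ℝ) ≤ (1-y)^(s+1) := pow_nonneg (by linarith) _
            have hc : (1-y)^(s+1) * w r ≤ 1 := mul_le_one₀ hp1' (hnn r) (hw1 r)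
            have : (1 - pt) * (1-y)^(s+1) * w r ≤ 1 - pt := by
              calc (1 - pt) * (1-y)^(s+1) * w r = (1-pt) * ((1-y)^(s+1) * w r) := by ring
                _ ≤ (1-pt) * 1 := mul_le_mul_of_nonneg_left hc (by linarith)
                _ = 1 - pt := by ring
            have h5 : r + (s+1) = r+s+1 := by omega
            rw [h5]; linarith
      have hch := chain t (m - t - 1) (by omega)
      rw [show m - t - 1 + t = m - 1 by omega] at hch
      have hrec' := hrec m hm
      have hkey2 : x * w (m-t-1) ≤ y * w (m-1) := by
        have hW0 := hnn (m-t-1)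
        have h6 : y * ((1 - pt) * (1-y)^t * w (m-t-1)) ≤ y * w (m-1) :=
          mul_le_mul_of_nonneg_left hch (by linarith)
        nlinarith
      nlinarith
  -- global lower bound
  have hlow : ∀ s, (1 - pt) * (1-y)^s ≤ w (t + s) := by
    intro s
    induction s with
    | zero => simp [hw_t]
    | succ s ihs =>
      have h1 := hratio (t+s+1) (by omega)
      rw [show t+s+1-1 = t+s by omega] at h1
      have h2 : (1-y) * ((1 - pt) * (1-y)^s) ≤ (1-y) * w (t+s) :=
        mul_le_mul_of_nonneg_left ihs (by linarith)
      calc (1 - pt) * (1-y)^(s+1) = (1-y)*((1-pt)*(1-y)^s) := by ring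
        _ ≤ (1-y) * w (t+s) := h2
        _ ≤ w (t+s+1) := h1
  -- global upper bound
  have hup : ∀ s, w (t + s) ≤ (1 - pt) * (1-x)^s := by
    intro s
    induction s with
    | zero => simp [hw_t]
    | succ s ihs =>
      have hrec' := hrec (t+s+1) (by omega)
      rw [show t+s+1-1 = t+s by omega, show t+s+1-t-1 = s by omega] at hrec'
      have hm1 : w (t+s) ≤ w s := hmono s (t+s) (by omega)
      have h2 : w (t+s+1) ≤ (1-x) * w (t+s) := by nlinarith
      calc w (t+s+1) ≤ (1-x) * w (t+s) := h2
        _ ≤ (1-x) * ((1-pt)*(1-x)^s) := mul_le_mul_of_nonneg_left ihs (by nlinarith)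
        _ = (1-pt) * (1-x)^(s+1) := by ring
  -- specialize at n
  set N := n - t with hN
  clear_value N
  have hN1 : 1 ≤ N := by omega
  have htN : t + N = n := by omega
  set lam := ((N:ℕ):ℝ) * x + pt with hlam
  clear_value lam
  have hlamx : lam = (N:ℝ) * x + pt := hlam
  have hNr1 : (1:ℝ) ≤ (N:ℝ) := by exact_mod_cast hN1
  have hNx0 : (0:ℝ) ≤ (N:ℝ) * x := by positivity
  have hlam_pos : 0 < lam := by rw [hlamx]; nlinarith
  have hlam_pt : pt ≤ lam := by rw [hlamx]; nlinarith
  have hNx_lam : (N:ℝ) * x = lam - pt := by rw [hlamx]; ring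
  -- upper: w n ≤ exp(-lam)
  have hub : w n ≤ exp (-lam) := by
    have h1 : w n ≤ (1-pt) * (1-x)^N := by rw [← htN]; exact hup N
    have h2 : (1:ℝ) - pt ≤ exp (-pt) := by
      have := Real.add_one_le_exp (-pt); linarith
    have h3 : (1-x)^N ≤ (exp (-x))^N := by
      apply pow_le_pow_left₀ (by nlinarith)
      have := Real.add_one_le_exp (-x); linarith
    have h4 : (exp (-x))^N = exp (-((N:ℝ)*x)) := by
      rw [← Real.exp_nat_mul]; ring_nf
    have h5 : (1-pt)*(1-x)^N ≤ exp (-pt) * exp (-((N:ℝ)*x)) := by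
      apply mul_le_mul h2 (by rw [← h4]; exact h3) (pow_nonneg (by nlinarith) N) (exp_pos _).le
    rw [← Real.exp_add] at h5
    have he : -pt + -((N:ℝ)*x) = -lam := by rw [hlamx]; ring
    rw [he] at h5
    linarith
  refine ⟨hub, ?_⟩
  -- lower bound comparison
  have hzz := stmt6_exp_lb y hy0.le hy12
  set Nr : ℝ := ((N:ℕ):ℝ) with hNr
  have hlow' : (1-pt) * exp (-((N:ℝ)*(y + 2*y^2))) ≤ w n := by
    have h1 : exp (-((N:ℝ)*(y + 2*y^2))) = (exp (-(y + 2*y^2)))^N := by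
      rw [← Real.exp_nat_mul]; ring_nf
    have h2 : (exp (-(y + 2*y^2)))^N ≤ (1-y)^N := pow_le_pow_left₀ (exp_pos _).le hzz N
    have h3 : (1-pt) * exp (-((N:ℝ)*(y + 2*y^2))) ≤ (1-pt) * (1-y)^N := by
      rw [h1]; exact mul_le_mul_of_nonneg_left h2 (by linarith)
    have h4 : (1-pt) * (1-y)^N ≤ w n := by rw [← htN]; exact hlow N
    linarith
  have hlamE : lam = Nr*x + pt := by rw [hlam, hNr]
  exact stmt6_tail pt x D y (t:ℝ) Nr lam (w n) hpt0 hpt1 h1t hx0 hxpt hD hD4 hyD hy0 hy2x hy12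
    (by rw [hNr]; exact_mod_cast hN1) hlamE hub (by rw [hNr]; exact hlow')

/-- run event: coordinates i,…,i+t-1 all equal a -/
def stmt6Run {Ω : Type} (X : ℕ → Ω → ℤ) (a : ℤ) (t i : ℕ) : Set Ω :=
  ⋂ j ∈ Finset.Ico i (i+t), X j ⁻¹' ({a} : Set ℤ)

/-- no run starting in [1, m+1-t] -/
def stmt6E {Ω : Type} (X : ℕ → Ω → ℤ) (a : ℤ) (t m : ℕ) : Set Ω :=
  ⋂ i ∈ Finset.Icc 1 (m+1-t), (stmt6Run X a t i)ᶜ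

section
variable {Ω : Type} [MeasurableSpace Ω] {P : Measure Ω} {X : ℕ → Ω → ℤ} {a : ℤ} {t : ℕ}

lemma stmt6_mem_Run {i : ℕ} {ω : Ω} :
    ω ∈ stmt6Run X a t i ↔ ∀ j, i ≤ j → j < i + t → X j ω = a := by
  simp [stmt6Run]

lemma stmt6_mem_E {m : ℕ} {ω : Ω} :
    ω ∈ stmt6E X a t m ↔
      ∀ i, 1 ≤ i → i ≤ m+1-t → ¬ (∀ j, i ≤ j → j < i + t → X j ω = a) := by
  simp [stmt6E, stmt6_mem_Run]

lemma stmt6Run_meas (hmeas : ∀ i, Measurable (X i)) (i : ℕ) :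
    MeasurableSet (stmt6Run X a t i) :=
  Finset.measurableSet_biInter _ (fun j _ => (hmeas j) (measurableSet_singleton a))

lemma stmt6E_meas (hmeas : ∀ i, Measurable (X i)) (m : ℕ) :
    MeasurableSet (stmt6E X a t m) :=
  Finset.measurableSet_biInter _ (fun i _ => (stmt6Run_meas hmeas i).compl)

lemma stmt6_E_split {m : ℕ} (ht : 1 ≤ t) (hm : t + 1 ≤ m) :
    stmt6E X a t m = stmt6E X a t (m-1) ∩ (stmt6Run X a t (m+1-t))ᶜ := by
  ext ω
  simp only [Set.mem_inter_iff, stmt6_mem_E, Set.mem_compl_iff, stmt6_mem_Run]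
  constructor
  · intro H
    refine ⟨fun i h1 h2 => H i h1 (by omega), H (m+1-t) (by omega) (by omega)⟩
  · rintro ⟨H1, H2⟩ i h1 h2
    rcases Nat.lt_or_ge i (m+1-t) with h | h
    · exact H1 i h1 (by omega)
    · have : i = m+1-t := by omega
      rw [this]; exact H2

lemma stmt6_E_key {m : ℕ} (ht : 1 ≤ t) (hm : t + 1 ≤ m) :
    stmt6E X a t (m-1) ∩ stmt6Run X a t (m+1-t)
      = stmt6E X a t (m-t-1) ∩ ((X (m-t) ⁻¹' ({a}ᶜ : Set ℤ)) ∩ stmt6Run X a t (m+1-t)) := by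
  ext ω
  simp only [Set.mem_inter_iff, stmt6_mem_E, stmt6_mem_Run, Set.mem_preimage,
    Set.mem_compl_iff, Set.mem_singleton_iff]
  constructor
  · rintro ⟨H1, H2⟩
    have hne : ¬ X (m-t) ω = a := by
      intro heq
      apply H1 (m-t) (by omega) (by omega)
      intro j hj1 hj2
      rcases Nat.eq_or_lt_of_le hj1 with h | h
      · rw [← h]; exact heq
      · exact H2 j (by omega) (by omega)
    refine ⟨fun i h1 h2 hrun => H1 i h1 (by omega) hrun, hne, H2⟩
  · rintro ⟨H1, hne, H2⟩
    refine ⟨?_, H2⟩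
    intro i h1 h2 hrun
    rcases Nat.lt_or_ge (i + 2*t) (m+1) with h | h
    · exact H1 i h1 (by omega) hrun
    · exact hne (hrun (m-t) (by omega) (by omega))

end

section
variable {Ω : Type} [MeasurableSpace Ω] (P : Measure Ω) [IsProbabilityMeasure P]
variable {X : ℕ → Ω → ℤ} {a : ℤ} {pa : ℝ} {t : ℕ}

lemma stmt6_cyl (hindep : iIndepFun X P)
    (s : Finset ℕ) (B : ℕ → Set ℤ) (hB : ∀ j, MeasurableSet (B j)) :
    P (⋂ j ∈ s, X j ⁻¹' B j) = ∏ j ∈ s, P (X j ⁻¹' B j) :=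
  hindep.measure_inter_preimage_eq_mul s (fun i _ => hB i)

lemma stmt6_RunP (hindep : iIndepFun X P)
    (hatom : ∀ j, P (X j ⁻¹' ({a} : Set ℤ)) = ENNReal.ofReal pa)
    (hpa0 : 0 ≤ pa) (i : ℕ) :
    P (stmt6Run X a t i) = ENNReal.ofReal (pa^t) := by
  rw [stmt6Run, stmt6_cyl P hindep _ _ (fun _ => measurableSet_singleton a)]
  rw [Finset.prod_congr rfl (fun j _ => hatom j), Finset.prod_const, Nat.card_Ico,
    Nat.add_sub_cancel_left, ENNReal.ofReal_pow hpa0]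

lemma stmt6_pairP (hindep : iIndepFun X P)
    (hmeas : ∀ i, Measurable (X i))
    (hatom : ∀ j, P (X j ⁻¹' ({a} : Set ℤ)) = ENNReal.ofReal pa)
    (hpa0 : 0 ≤ pa) {m : ℕ} (ht : 1 ≤ t) (hm : t + 1 ≤ m) :
    P ((X (m-t) ⁻¹' ({a}ᶜ : Set ℤ)) ∩ stmt6Run X a t (m+1-t))
      = (1 - ENNReal.ofReal pa) * ENNReal.ofReal (pa^t) := by
  classical
  have hset : (X (m-t) ⁻¹' ({a}ᶜ : Set ℤ)) ∩ stmt6Run X a t (m+1-t)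
      = ⋂ j ∈ Finset.Icc (m-t) m, X j ⁻¹' (if j = m-t then ({a}ᶜ : Set ℤ) else {a}) := by
    ext ω
    simp only [Set.mem_inter_iff, Set.mem_preimage, Set.mem_compl_iff, Set.mem_singleton_iff,
      stmt6_mem_Run, Set.mem_iInter, Finset.mem_Icc]
    constructor
    · rintro ⟨h1, h2⟩ j hj
      by_cases hje : j = m-t
      · simp [hje, h1]
      · simp only [if_neg hje, Set.mem_singleton_iff]
        exact h2 j (by omega) (by omega)
    · intro H
      constructor
      · have := H (m-t) (by omega)
        simpa using this
      · intro j hj1 hj2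
        have := H j (by omega)
        rw [if_neg (by omega)] at this
        simpa using this
  rw [hset, stmt6_cyl P hindep _ _ (fun j => by
    by_cases h : j = m-t
    · simp only [if_pos h]; exact (measurableSet_singleton a).compl
    · simp only [if_neg h]; exact measurableSet_singleton a)]
  have hins : Finset.Icc (m-t) m = insert (m-t) (Finset.Icc (m-t+1) m) := by
    ext z; simp only [Finset.mem_Icc, Finset.mem_insert]; omega
  rw [hins, Finset.prod_insert (by simp only [Finset.mem_Icc]; omega)]
  have h1 : P (X (m-t) ⁻¹' (if m-t = m-t then ({a}ᶜ : Set ℤ) else {a})) = 1 - ENNReal.ofReal pa := by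
    rw [if_pos rfl, show (X (m-t) ⁻¹' ({a}ᶜ : Set ℤ)) = (X (m-t) ⁻¹' ({a} : Set ℤ))ᶜ from rfl,
      prob_compl_eq_one_sub ((hmeas _) (measurableSet_singleton a)), hatom]
  have h2 : ∏ j ∈ Finset.Icc (m-t+1) m, P (X j ⁻¹' (if j = m-t then ({a}ᶜ : Set ℤ) else {a}))
      = ENNReal.ofReal (pa^t) := by
    have hc : ∀ j ∈ Finset.Icc (m-t+1) m,
        P (X j ⁻¹' (if j = m-t then ({a}ᶜ : Set ℤ) else {a})) = ENNReal.ofReal pa := by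
      intro j hj
      simp only [Finset.mem_Icc] at hj
      rw [if_neg (by omega)]
      exact hatom j
    rw [Finset.prod_congr rfl hc, Finset.prod_const, Nat.card_Icc,
      show m + 1 - (m-t+1) = t by omega, ENNReal.ofReal_pow hpa0]
  rw [h1, h2]

lemma stmt6_block (hindep : iIndepFun X P)
    (hmeas : ∀ i, Measurable (X i)) {m : ℕ} (ht : 1 ≤ t) (hm : t + 1 ≤ m) :
    P (stmt6E X a t (m-t-1) ∩ ((X (m-t) ⁻¹' ({a}ᶜ : Set ℤ)) ∩ stmt6Run X a t (m+1-t)))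
      = P (stmt6E X a t (m-t-1))
        * P ((X (m-t) ⁻¹' ({a}ᶜ : Set ℤ)) ∩ stmt6Run X a t (m+1-t)) := by
  classical
  set S : Finset ℕ := Finset.Icc 1 (m-t-1) with hS
  set T : Finset ℕ := Finset.Icc (m-t) m with hT
  have hST : Disjoint S T := by
    rw [Finset.disjoint_left]
    intro j hjS hjT
    rw [hS, Finset.mem_Icc] at hjS
    rw [hT, Finset.mem_Icc] at hjT
    omega
  have hIF := hindep.indepFun_finset S T hST hmeas
  set AS : Set (↥S → ℤ) :=
    {v | ∀ i, 1 ≤ i → i ≤ (m-t-1)+1-t → ¬ (∀ j, i ≤ j → j < i + t → ∀ h : j ∈ S, v ⟨j, h⟩ = a)}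
    with hAS
  set BT : Set (↥T → ℤ) :=
    {v | (∀ h : (m-t) ∈ T, v ⟨m-t, h⟩ ≠ a) ∧
      ∀ j, m+1-t ≤ j → j < (m+1-t) + t → ∀ h : j ∈ T, v ⟨j, h⟩ = a} with hBT
  have hASm : MeasurableSet AS := by
    have : AS = ⋂ i ∈ Finset.Icc 1 ((m-t-1)+1-t),
        (⋂ j ∈ Finset.Ico i (i+t), {v : ↥S → ℤ | ∀ h : j ∈ S, v ⟨j, h⟩ = a})ᶜ := by
      ext v
      simp only [hAS, Set.mem_setOf_eq, Set.mem_iInter, Set.mem_compl_iff, Finset.mem_Icc,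
        Finset.mem_Ico]
      constructor
      · intro H i hi hin
        exact H i hi.1 hi.2 (fun j hj1 hj2 => hin j ⟨hj1, hj2⟩)
      · intro H i h1 h2 hin
        exact H i ⟨h1, h2⟩ (fun j hj => hin j hj.1 hj.2)
    rw [this]
    apply Finset.measurableSet_biInter
    intro i _
    apply MeasurableSet.compl
    apply Finset.measurableSet_biInter
    intro j _
    by_cases hj : j ∈ S
    · have he : {v : ↥S → ℤ | ∀ h : j ∈ S, v ⟨j, h⟩ = a}
          = (fun v : ↥S → ℤ => v ⟨j, hj⟩) ⁻¹' ({a} : Set ℤ) := by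
        ext v
        simp only [Set.mem_setOf_eq, Set.mem_preimage, Set.mem_singleton_iff]
        exact ⟨fun H => H hj, fun H _ => H⟩
      rw [he]
      exact (measurable_pi_apply _) (measurableSet_singleton a)
    · have he : {v : ↥S → ℤ | ∀ h : j ∈ S, v ⟨j, h⟩ = a} = Set.univ := by
        ext v; simp [hj]
      rw [he]; exact MeasurableSet.univ
  have hBTm : MeasurableSet BT := by
    have : BT = {v : ↥T → ℤ | ∀ h : (m-t) ∈ T, v ⟨m-t, h⟩ ≠ a}
        ∩ ⋂ j ∈ Finset.Ico (m+1-t) ((m+1-t)+t), {v : ↥T → ℤ | ∀ h : j ∈ T, v ⟨j, h⟩ = a} := by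
      ext v
      simp only [hBT, Set.mem_setOf_eq, Set.mem_inter_iff, Set.mem_iInter, Finset.mem_Ico]
      constructor
      · rintro ⟨H1, H2⟩; exact ⟨H1, fun j hj => H2 j hj.1 hj.2⟩
      · rintro ⟨H1, H2⟩; exact ⟨H1, fun j h1 h2 => H2 j ⟨h1, h2⟩⟩
    rw [this]
    apply MeasurableSet.inter
    · by_cases hj : (m-t) ∈ T
      · have he : {v : ↥T → ℤ | ∀ h : (m-t) ∈ T, v ⟨m-t, h⟩ ≠ a}
            = (fun v : ↥T → ℤ => v ⟨m-t, hj⟩) ⁻¹' ({a}ᶜ : Set ℤ) := by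
          ext v
          simp only [Set.mem_setOf_eq, Set.mem_preimage, Set.mem_compl_iff, Set.mem_singleton_iff]
          exact ⟨fun H => H hj, fun H _ => H⟩
        rw [he]
        exact (measurable_pi_apply _) (measurableSet_singleton a).compl
      · have he : {v : ↥T → ℤ | ∀ h : (m-t) ∈ T, v ⟨m-t, h⟩ ≠ a} = Set.univ := by
          ext v; simp [hj]
        rw [he]; exact MeasurableSet.univ
    · apply Finset.measurableSet_biInter
      intro j _
      by_cases hj : j ∈ T
      · have he : {v : ↥T → ℤ | ∀ h : j ∈ T, v ⟨j, h⟩ = a}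
            = (fun v : ↥T → ℤ => v ⟨j, hj⟩) ⁻¹' ({a} : Set ℤ) := by
          ext v
          simp only [Set.mem_setOf_eq, Set.mem_preimage, Set.mem_singleton_iff]
          exact ⟨fun H => H hj, fun H _ => H⟩
        rw [he]
        exact (measurable_pi_apply _) (measurableSet_singleton a)
      · have he : {v : ↥T → ℤ | ∀ h : j ∈ T, v ⟨j, h⟩ = a} = Set.univ := by
          ext v; simp [hj]
        rw [he]; exact MeasurableSet.univ
  have hFS : (fun ω (i : ↥S) => X i ω) ⁻¹' AS = stmt6E X a t (m-t-1) := by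
    ext ω
    simp only [Set.mem_preimage, hAS, Set.mem_setOf_eq, stmt6_mem_E]
    constructor
    · intro H i h1 h2 hrun
      exact H i h1 h2 (fun j hj1 hj2 _ => hrun j hj1 hj2)
    · intro H i h1 h2 hrun
      apply H i h1 h2
      intro j hj1 hj2
      have hjS : j ∈ S := by rw [hS, Finset.mem_Icc]; omega
      exact hrun j hj1 hj2 hjS
  have hGT : (fun ω (i : ↥T) => X i ω) ⁻¹' BT
      = (X (m-t) ⁻¹' ({a}ᶜ : Set ℤ)) ∩ stmt6Run X a t (m+1-t) := by
    ext ω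
    simp only [Set.mem_preimage, hBT, Set.mem_setOf_eq, Set.mem_inter_iff, Set.mem_compl_iff,
      Set.mem_singleton_iff, stmt6_mem_Run]
    constructor
    · rintro ⟨H1, H2⟩
      refine ⟨H1 (by rw [hT, Finset.mem_Icc]; omega), ?_⟩
      intro j hj1 hj2
      exact H2 j hj1 hj2 (by rw [hT, Finset.mem_Icc]; omega)
    · rintro ⟨H1, H2⟩
      exact ⟨fun _ => H1, fun j hj1 hj2 _ => H2 j hj1 hj2⟩
  have hMUL := hIF.measure_inter_preimage_eq_mul AS BT hASm hBTm
  rw [hFS, hGT] at hMUL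
  exact hMUL

lemma stmt6_rec (hindep : iIndepFun X P)
    (hmeas : ∀ i, Measurable (X i))
    (hatom : ∀ j, P (X j ⁻¹' ({a} : Set ℤ)) = ENNReal.ofReal pa)
    (hpa0 : 0 ≤ pa) {m : ℕ} (ht : 1 ≤ t) (hm : t + 1 ≤ m) :
    P (stmt6E X a t (m-1)) = P (stmt6E X a t m)
      + P (stmt6E X a t (m-t-1)) * ((1 - ENNReal.ofReal pa) * ENNReal.ofReal (pa^t)) := by
  have hsplit := stmt6_E_split (X := X) (a := a) ht hm
  have hu : stmt6E X a t (m-1)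
      = stmt6E X a t m ∪ (stmt6E X a t (m-1) ∩ stmt6Run X a t (m+1-t)) := by
    rw [hsplit]
    ext ω
    simp only [Set.mem_union, Set.mem_inter_iff, Set.mem_compl_iff]
    tauto
  have hdisj : Disjoint (stmt6E X a t m) (stmt6E X a t (m-1) ∩ stmt6Run X a t (m+1-t)) := by
    rw [hsplit]
    exact Set.disjoint_left.mpr (fun ω hω hω2 => hω.2 hω2.2)
  conv_lhs => rw [hu]
  rw [measure_union hdisj ((stmt6E_meas hmeas _).inter (stmt6Run_meas hmeas _))]
  congr 1
  rw [stmt6_E_key ht hm, stmt6_block P hindep hmeas ht hm,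
    stmt6_pairP P hindep hmeas hatom hpa0 ht hm]

end

/-- Corollary 2.1: For i.i.d. integer-valued X's whose supremum of
support a is attained with probability p_a ∈ (0,1), and M_{n;t} the maximal window
sum of length t < n: M_{n;t} ≥ a·t iff there is a run of t consecutive values equal
to a, and with λ = (n−t)p_a^t(1−p_a) + p_a^t,
|P(M_{n;t} ≥ at) − (1−e^{−λ})| ≤ C(λ∧1)e^{−ct} for constants C, c > 0 depending only
on p_a. -/
theorem stmt6 (pa : ℝ) (hpa : pa ∈ Set.Ioo (0 : ℝ) 1) :
    ∃ C c : ℝ, 0 < C ∧ 0 < c ∧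
      ∀ (Ω : Type) (_inst : MeasurableSpace Ω) (P : Measure Ω)
        (_hP : IsProbabilityMeasure P)
        (X : ℕ → Ω → ℤ) (a : ℤ) (n t : ℕ)
        (_hmeas : ∀ i, Measurable (X i))
        (_hindep : iIndepFun X P)
        (_hident : ∀ i, Measure.map (X i) P = Measure.map (X 0) P)
        (_hatom : ∀ i, (P {ω | X i ω = a}).toReal = pa)
        (_hsup : ∀ i, P {ω | a < X i ω} = 0)
        (ht : 0 < t) (htn : t < n)
        (M : Ω → ℤ)
        (_hM : ∀ ω, M ω = (Finset.Icc 1 (n - t + 1)).sup'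
          (Finset.nonempty_Icc.mpr (by omega))
          (fun i => ∑ j ∈ Finset.Ico i (i + t), X j ω))
        (lam : ℝ)
        (_hlam : lam = ((n - t : ℕ) : ℝ) * pa ^ t * (1 - pa) + pa ^ t),
        (∀ ω, (∀ j, X j ω ≤ a) →
          ((a * t ≤ M ω) ↔
            ∃ i ∈ Finset.Icc 1 (n - t + 1), ∀ j ∈ Finset.Ico i (i + t), X j ω = a)) ∧
        |(P {ω | a * t ≤ M ω}).toReal - (1 - exp (-lam))| ≤
          C * min lam 1 * exp (-c * t) := by
  obtain ⟨hpa0, hpa1⟩ := hpa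
  have hlog : Real.log pa < 0 := Real.log_neg hpa0 hpa1
  set c : ℝ := -Real.log pa / 2 with hc
  have hc0 : 0 < c := by rw [hc]; linarith
  clear_value c
  have he1 : (2:ℝ) ≤ Real.exp 1 := by have := Real.add_one_le_exp 1; linarith
  refine ⟨372 / (c * (1 - pa)), c, div_pos (by norm_num) (mul_pos hc0 (by linarith)), hc0, ?_⟩
  intro Ω _inst P hP X a n t hmeas hindep _hident hatom hsup ht htn M hM lam hlam
  have ht1 : 1 ≤ t := ht
  have hpat0 : (0:ℝ) < pa ^ t := pow_pos hpa0 t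
  have hpat1 : pa ^ t ≤ 1 := pow_le_one₀ hpa0.le hpa1.le
  -- part 1: the pointwise characterization
  have hclaim : ∀ ω, (∀ j, X j ω ≤ a) → ((a * (t:ℤ) ≤ M ω) ↔
      ∃ i ∈ Finset.Icc 1 (n - t + 1), ∀ j ∈ Finset.Ico i (i + t), X j ω = a) := by
    intro ω hω
    rw [hM ω]
    constructor
    · intro hle
      obtain ⟨b, hb, hbe⟩ := Finset.exists_mem_eq_sup'
        ((Finset.nonempty_Icc.mpr (by omega : 1 ≤ n - t + 1)) :
          (Finset.Icc 1 (n - t + 1)).Nonempty)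
        (fun i => ∑ j ∈ Finset.Ico i (i + t), X j ω)
      have hle2 : a * (t:ℤ) ≤ ∑ j ∈ Finset.Ico b (b + t), X j ω :=
        le_trans hle (le_of_eq hbe)
      refine ⟨b, hb, ?_⟩
      by_contra hcon
      push_neg at hcon
      obtain ⟨j0, hj0, hj0ne⟩ := hcon
      have hlt : ∑ j ∈ Finset.Ico b (b + t), X j ω < ∑ _j ∈ Finset.Ico b (b + t), a :=
        Finset.sum_lt_sum (fun j _ => hω j) ⟨j0, hj0, lt_of_le_of_ne (hω j0) hj0ne⟩
      rw [Finset.sum_const, Nat.card_Ico, Nat.add_sub_cancel_left, nsmul_eq_mul] at hlt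
      have hcomm : (t:ℤ) * a = a * (t:ℤ) := mul_comm _ _
      linarith [hle2, hlt, hcomm]
    · rintro ⟨i, hi, hrun⟩
      have hsum : ∑ j ∈ Finset.Ico i (i + t), X j ω = (t:ℤ) * a := by
        rw [Finset.sum_congr rfl (fun j hj => hrun j hj), Finset.sum_const, Nat.card_Ico,
          Nat.add_sub_cancel_left, nsmul_eq_mul]
      have hle := Finset.le_sup'
        (fun i => ∑ j ∈ Finset.Ico i (i + t), X j ω) hi
      rw [hsum] at hle
      calc a * (t:ℤ) = (t:ℤ) * a := mul_comm _ _
        _ ≤ _ := hle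
  refine ⟨hclaim, ?_⟩
  -- probability part
  have hatomE : ∀ j, P (X j ⁻¹' ({a} : Set ℤ)) = ENNReal.ofReal pa := by
    intro j
    have h2 : (P (X j ⁻¹' ({a} : Set ℤ))).toReal = pa := hatom j
    rw [← h2, ENNReal.ofReal_toReal (measure_ne_top P _)]
  set w : ℕ → ℝ := fun m => (P (stmt6E X a t m)).toReal with hw
  have hw_lt : ∀ m, m < t → w m = 1 := by
    intro m hmt
    show (P (stmt6E X a t m)).toReal = 1
    rw [stmt6E, show m+1-t = 0 by omega, Finset.Icc_eq_empty (by omega)]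
    simp
  have hofs : (1 : ℝ≥0∞) - ENNReal.ofReal pa = ENNReal.ofReal (1 - pa) := by
    rw [ENNReal.ofReal_sub _ hpa0.le, ENNReal.ofReal_one]
  have hw_t : w t = 1 - pa^t := by
    show (P (stmt6E X a t t)).toReal = 1 - pa^t
    rw [stmt6E, show t+1-t = 1 by omega, Finset.Icc_self,
      show (⋂ i ∈ ({1} : Finset ℕ), (stmt6Run X a t i)ᶜ) = (stmt6Run X a t 1)ᶜ from by simp]
    rw [prob_compl_eq_one_sub (stmt6Run_meas hmeas 1), stmt6_RunP P hindep hatomE hpa0.le 1]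
    rw [ENNReal.toReal_sub_of_le (by exact ENNReal.ofReal_le_one.2 hpat1) ENNReal.one_ne_top]
    rw [ENNReal.toReal_one, ENNReal.toReal_ofReal (by positivity)]
  have hmono : ∀ k m, k ≤ m → w m ≤ w k := by
    intro k m hkm
    apply ENNReal.toReal_mono (measure_ne_top P _)
    apply measure_mono
    intro ω hω
    rw [stmt6_mem_E] at *
    intro i h1 h2
    exact hω i h1 (by omega)
  have hnn : ∀ m, 0 ≤ w m := fun m => ENNReal.toReal_nonneg
  have hrec : ∀ m, t + 1 ≤ m → w (m-1) = w m + (pa^t*(1-pa)) * w (m-t-1) := by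
    intro m hm
    have h := stmt6_rec P hindep hmeas hatomE hpa0.le ht1 hm
    have hne2 : P (stmt6E X a t (m-t-1)) * ((1 - ENNReal.ofReal pa) * ENNReal.ofReal (pa^t)) ≠ ⊤ :=
      ENNReal.mul_ne_top (measure_ne_top P _)
        (ENNReal.mul_ne_top (by rw [hofs]; exact ENNReal.ofReal_ne_top) ENNReal.ofReal_ne_top)
    show (P (stmt6E X a t (m-1))).toReal = _
    rw [h, ENNReal.toReal_add (measure_ne_top P _) hne2, ENNReal.toReal_mul, ENNReal.toReal_mul,
      hofs, ENNReal.toReal_ofReal (by linarith), ENNReal.toReal_ofReal (by positivity)]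
    show _ = (P (stmt6E X a t m)).toReal + pa ^ t * (1 - pa) * (P (stmt6E X a t (m-t-1))).toReal
    ring
  -- R and a.e. identification
  set R : Set Ω := ⋃ i ∈ Finset.Icc 1 (n-t+1), stmt6Run X a t i with hR
  have hRmeas : MeasurableSet R := Finset.measurableSet_biUnion _ (fun i _ => stmt6Run_meas hmeas i)
  have hmemR : ∀ ω : Ω, ω ∈ R ↔
      ∃ i ∈ Finset.Icc 1 (n - t + 1), ∀ j ∈ Finset.Ico i (i + t), X j ω = a := by
    intro ω
    rw [hR]
    simp [stmt6_mem_Run, Finset.mem_Ico]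
  have hG : ∀ᵐ ω ∂P, ∀ j, X j ω ≤ a := by
    rw [MeasureTheory.ae_all_iff]
    intro j
    rw [ae_iff]
    have hs : {ω | ¬ X j ω ≤ a} = {ω | a < X j ω} := by ext ω; simp [not_le]
    rw [hs]; exact hsup j
  have hPS : P {ω | a * t ≤ M ω} = P R := by
    apply measure_congr
    rw [Filter.eventuallyEq_set]
    filter_upwards [hG] with ω hω
    exact Iff.trans (hclaim ω hω) (hmemR ω).symm
  have hRC : Rᶜ = stmt6E X a t n := by
    ext ω
    rw [Set.mem_compl_iff, hmemR ω, stmt6_mem_E]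
    constructor
    · intro H i h1 h2 hrun
      exact H ⟨i, by rw [Finset.mem_Icc]; omega,
        fun j hj => by rw [Finset.mem_Ico] at hj; exact hrun j hj.1 hj.2⟩
    · rintro H ⟨i, hi, hrun⟩
      rw [Finset.mem_Icc] at hi
      exact H i hi.1 (by omega) (fun j h1 h2 => hrun j (Finset.mem_Ico.mpr ⟨h1, h2⟩))
  have hPR1 : (P R).toReal = 1 - w n := by
    have h1 : P (Rᶜ) = 1 - P R := prob_compl_eq_one_sub hRmeas
    have h2 : w n = (1 - P R).toReal := by
      show (P (stmt6E X a t n)).toReal = _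
      rw [← hRC, h1]
    rw [h2, ENNReal.toReal_sub_of_le prob_le_one ENNReal.one_ne_top, ENNReal.toReal_one]
    ring
  -- union bound
  have hPRle : (P R).toReal ≤ ((n-t+1 : ℕ):ℝ) * pa^t := by
    have h1 : P R ≤ ∑ i ∈ Finset.Icc 1 (n-t+1), P (stmt6Run X a t i) :=
      measure_biUnion_finset_le _ _
    rw [Finset.sum_congr rfl (fun i _ => stmt6_RunP P hindep hatomE hpa0.le i),
      Finset.sum_const, Nat.card_Icc, nsmul_eq_mul] at h1
    have h2 := ENNReal.toReal_mono (by
        exact ENNReal.mul_ne_top (ENNReal.natCast_ne_top _) ENNReal.ofReal_ne_top) h1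
    rw [ENNReal.toReal_mul] at h2
    have h3 : ((n - t + 1 + 1 - 1 : ℕ) : ℝ≥0∞).toReal = ((n-t+1 : ℕ):ℝ) := by
      rw [show n - t + 1 + 1 - 1 = n - t + 1 from by omega, ENNReal.toReal_natCast]
    rw [h3, ENNReal.toReal_ofReal (by positivity)] at h2
    exact h2
  -- final assembly
  rw [show -c * (t:ℝ) = -(c*(t:ℝ)) by ring]
  rw [hPS, hPR1]
  rw [show 1 - w n - (1 - exp (-lam)) = exp (-lam) - w n by ring]
  have hQ0 : 0 < 1 - pa := by linarith
  have hQ1 : 1 - pa ≤ 1 := by linarith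
  have hNr1 : (1:ℝ) ≤ ((n - t : ℕ):ℝ) := by
    have : 1 ≤ n - t := by omega
    exact_mod_cast this
  have hNpa : (0:ℝ) ≤ ((n - t : ℕ):ℝ) * pa^t * (1 - pa) :=
    mul_nonneg (mul_nonneg (Nat.cast_nonneg _) hpat0.le) hQ0.le
  have hlam0 : 0 < lam := by rw [hlam]; linarith
  have hlam_pt : pa^t ≤ lam := by rw [hlam]; linarith
  have hmin0 : (0:ℝ) ≤ min lam 1 := le_min hlam0.le one_pos.le
  have hexpn1 : exp (-lam) ≤ 1 := by
    calc exp (-lam) ≤ exp 0 := Real.exp_le_exp.2 (by linarith)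
      _ = 1 := Real.exp_zero
  have h1me_lam : 1 - exp (-lam) ≤ lam := by
    have := Real.add_one_le_exp (-lam); linarith
  have h1me_0 : 0 ≤ 1 - exp (-lam) := by linarith
  have hwle1 : w n ≤ 1 := by
    have h := hmono 0 n (Nat.zero_le n)
    rw [hw_lt 0 (by omega)] at h
    exact h
  -- exponential key facts
  have hct0 : (0:ℝ) ≤ c * t := by positivity
  have hpt_exp : pa ^ t = exp (-(c*(t:ℝ))) * exp (-(c*(t:ℝ))) := by
    have h1 : pa ^ t = exp ((t:ℝ) * log pa) := by
      rw [Real.exp_nat_mul, Real.exp_log hpa0]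
    rw [h1, ← Real.exp_add]
    congr 1
    rw [hc]; ring
  have K1 : Real.exp 1 * (c*(t:ℝ)) ≤ exp (c*(t:ℝ)) := by
    have h2 := Real.add_one_le_exp (c*(t:ℝ) - 1)
    have h3 : exp (c*(t:ℝ)) = Real.exp 1 * exp (c*(t:ℝ) - 1) := by
      rw [← Real.exp_add]; congr 1; ring
    calc Real.exp 1 * (c*(t:ℝ)) = Real.exp 1 * ((c*(t:ℝ) - 1) + 1) := by ring
      _ ≤ Real.exp 1 * exp (c*(t:ℝ) - 1) :=
        mul_le_mul_of_nonneg_left (by linarith) (exp_pos 1).le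
      _ = exp (c*(t:ℝ)) := h3.symm
  have hprod1 : exp (c*(t:ℝ)) * exp (-(c*(t:ℝ))) = 1 := by
    rw [← Real.exp_add]; simp
  have K2 : (t:ℝ) * exp (-(c*(t:ℝ))) * (c * Real.exp 1) ≤ 1 := by
    have h4 := mul_le_mul_of_nonneg_right K1 (exp_pos (-(c*(t:ℝ)))).le
    rw [hprod1] at h4
    nlinarith [h4]
  have K3 : (t:ℝ) * pa^t * (c * Real.exp 1) ≤ exp (-(c*(t:ℝ))) := by
    have h5 := mul_le_mul_of_nonneg_right K2 (exp_pos (-(c*(t:ℝ)))).le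
    calc (t:ℝ) * pa^t * (c * Real.exp 1)
        = ((t:ℝ) * exp (-(c*(t:ℝ))) * (c * Real.exp 1)) * exp (-(c*(t:ℝ))) := by
          rw [hpt_exp]; ring
      _ ≤ 1 * exp (-(c*(t:ℝ))) := h5
      _ = exp (-(c*(t:ℝ))) := one_mul _
  rcases le_or_gt (3 * (t:ℝ) * pa^t) (1/4) with hreg | hreg
  · -- analytic regime
    obtain ⟨hub, herr⟩ := stmt6_analytic pa hpa0 hpa1 t n ht1 htn hreg w hw_lt hw_t hmono hnn hrec
    have hlameq : (((n - t : ℕ):ℝ) * (pa^t*(1-pa)) + pa^t) = lam := by rw [hlam]; ring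
    rw [hlameq] at hub herr
    rw [abs_of_nonneg (by linarith : (0:ℝ) ≤ exp (-lam) - w n)]
    have hc31 : 31 * (t:ℝ) * pa^t ≤ 372 / (c * (1 - pa)) * exp (-(c*(t:ℝ))) := by
      have hcc : (31:ℝ) / (c * Real.exp 1) ≤ 372 / (c * (1 - pa)) := by
        rw [div_le_div_iff₀ (by positivity) (by positivity)]
        nlinarith [hc0, hQ1, he1, hQ0]
      have hck : (t:ℝ)*pa^t ≤ exp (-(c*(t:ℝ))) / (c * Real.exp 1) := by
        rw [le_div_iff₀ (by positivity)]; exact K3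
      calc 31*(t:ℝ)*pa^t = 31 * ((t:ℝ)*pa^t) := by ring
        _ ≤ 31 * (exp (-(c*(t:ℝ))) / (c * Real.exp 1)) :=
            mul_le_mul_of_nonneg_left hck (by norm_num)
        _ = (31 / (c * Real.exp 1)) * exp (-(c*(t:ℝ))) := by ring
        _ ≤ (372 / (c * (1 - pa))) * exp (-(c*(t:ℝ))) :=
            mul_le_mul_of_nonneg_right hcc (exp_pos _).le
    calc exp (-lam) - w n ≤ 31*(t:ℝ)*pa^t * min lam 1 := herr
      _ ≤ (372 / (c * (1 - pa)) * exp (-(c*(t:ℝ)))) * min lam 1 :=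
          mul_le_mul_of_nonneg_right hc31 hmin0
      _ = 372 / (c * (1 - pa)) * min lam 1 * exp (-(c*(t:ℝ))) := by ring
  · -- crude regime
    have hA1 : 1 - w n ≤ 1 := by linarith [hnn n]
    have hA0 : 0 ≤ 1 - w n := by linarith
    have hAQ : (1 - w n) * (1 - pa) ≤ lam := by
      have h6 : 1 - w n ≤ ((n-t+1 : ℕ):ℝ) * pa^t := by rw [← hPR1]; exact hPRle
      have h7 : ((n-t+1 : ℕ):ℝ) = ((n-t:ℕ):ℝ) + 1 := by push_cast; ring
      rw [hlam]
      rw [h7] at h6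
      nlinarith [hpat0.le, hNr1]
    have hcrude : |exp (-lam) - w n| ≤ (1/(1 - pa)) * min lam 1 := by
      rcases le_total lam 1 with hl1 | hl1
      · rw [min_eq_left hl1]
        have hAl : 1 - w n ≤ lam / (1 - pa) := (le_div_iff₀ hQ0).2 hAQ
        have hll : lam ≤ lam / (1 - pa) := by
          rw [le_div_iff₀ hQ0]; nlinarith
        have hdiv : (1/(1 - pa))*lam = lam/(1 - pa) := by ring
        rw [abs_le]
        constructor
        · linarith [h1me_lam, hA0, hll, hdiv]
        · have h8 : exp (-lam) - w n ≤ 1 - w n := by linarith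
          linarith [hAl, hdiv]
      · rw [min_eq_right hl1]
        have h1Q : (1:ℝ) ≤ 1/(1 - pa) := by rw [le_div_iff₀ hQ0]; linarith
        rw [abs_le]
        constructor
        · nlinarith [h1me_lam, hA0, hexpn1, hnn n, hwle1, exp_pos (-lam)]
        · nlinarith [hA1, exp_pos (-lam), hnn n]
    have htpa : (1:ℝ)/12 < (t:ℝ) * pa^t := by nlinarith
    have hexpct_lb : c * Real.exp 1 / 12 ≤ exp (-(c*(t:ℝ))) := by
      nlinarith [K3, mul_pos hc0 (exp_pos 1)]
    have hAfin : (1:ℝ)/(1 - pa) ≤ 372/(c*(1 - pa)) * exp (-(c*(t:ℝ))) := by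
      have hcne : c ≠ 0 := ne_of_gt hc0
      have hQne : (1 - pa) ≠ 0 := ne_of_gt hQ0
      have h2 : 372/(c*(1 - pa)) * (c * Real.exp 1 / 12) = 31 * Real.exp 1 / (1 - pa) := by
        field_simp; ring
      have h3 : 372/(c*(1 - pa)) * (c * Real.exp 1 / 12) ≤ 372/(c*(1 - pa)) * exp (-(c*(t:ℝ))) :=
        mul_le_mul_of_nonneg_left hexpct_lb (by positivity)
      have h4 : (1:ℝ)/(1 - pa) ≤ 31 * Real.exp 1 / (1 - pa) := by
        rw [div_le_div_iff₀ hQ0 hQ0]; nlinarith [he1]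
      rw [h2] at h3
      linarith
    calc |exp (-lam) - w n| ≤ (1/(1 - pa)) * min lam 1 := hcrude
      _ ≤ (372/(c*(1 - pa)) * exp (-(c*(t:ℝ)))) * min lam 1 :=
          mul_le_mul_of_nonneg_right hAfin hmin0
      _ = 372 / (c * (1 - pa)) * min lam 1 * exp (-(c*(t:ℝ))) := by ring
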